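/- Let K be a field, L a Lie algebra over K, and σ : L → L a Lie algebra endomorphism (a K-linear map with σ⁅v, w⁆ = ⁅σ(v), σ(w)⁆ for all v, w ∈ L). Let λ, μ ∈ K and let v, w ∈ L satisfy (σ − λ·id)ᵐ(v) = 0 and (σ − μ·id)ⁿ(w) = 0 for some positive integers m, n. Then (σ − λμ·id)^{m+n−1}(⁅v, w⁆) = 0. In particular, the bracket of the generalized eigenspace of σ for λ with the generalized eigenspace of σ for μ is contained in the generalized eigenspace of σ for λμ. -/
import Mathlib

private lemma aux_key {K : Type*} [Field K] {L : Type*} [LieRing L] [LieAlgebra K L]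
    (σ : L →ₗ⁅K⁆ L) (lam mu : K) :
    ∀ k m n : ℕ, m + n ≤ k → ∀ v w : L,
    ((σ.toLinearMap - lam • (1 : Module.End K L)) ^ m) v = 0 →
    ((σ.toLinearMap - mu • (1 : Module.End K L)) ^ n) w = 0 →
    ((σ.toLinearMap - (lam * mu) • (1 : Module.End K L)) ^ (m + n - 1)) ⁅v, w⁆ = 0 := by
  intro k
  induction k with
  | zero =>
    intro m n hk v w hv hw
    obtain ⟨rfl, rfl⟩ : m = 0 ∧ n = 0 := by omega
    simp only [pow_zero, Module.End.one_apply] at hv hw ⊢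
    rw [hv, zero_lie, map_zero]
  | succ k ih =>
    intro m n hk v w hv hw
    match m, n with
    | 0, n =>
      simp only [pow_zero, Module.End.one_apply] at hv
      rw [hv, zero_lie, map_zero]
    | m, 0 =>
      simp only [pow_zero, Module.End.one_apply] at hw
      rw [hw, lie_zero, map_zero]
    | a+1, b+1 =>
      have hexp : (a + 1) + (b + 1) - 1 = (a + b) + 1 := by omega
      rw [hexp, pow_succ]
      set A : Module.End K L := σ.toLinearMap - lam • (1 : Module.End K L) with hA
      set B : Module.End K L := σ.toLinearMap - mu • (1 : Module.End K L) with hB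
      have hbrk : (σ.toLinearMap - (lam * mu) • (1 : Module.End K L)) ⁅v, w⁆
          = ⁅A v, σ w⁆ + lam • ⁅v, B w⁆ := by
        simp only [hA, hB, LinearMap.sub_apply, LinearMap.smul_apply, Module.End.one_apply,
          sub_lie, lie_sub, lie_smul, smul_lie, smul_sub, LieHom.coe_toLinearMap]
        rw [σ.map_lie, mul_smul]
        abel
      rw [Module.End.mul_apply, hbrk, map_add, map_smul]
      have h1 : ((σ.toLinearMap - (lam * mu) • (1 : Module.End K L)) ^ (a + b)) ⁅A v, σ w⁆ = 0 := by
        have hAv : (A ^ a) (A v) = 0 := by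
          rw [← Module.End.mul_apply, ← pow_succ, hA]; exact hv
        have hσw : (B ^ (b + 1)) (σ.toLinearMap w) = 0 := by
          have hcomm : Commute B σ.toLinearMap :=
            Commute.sub_left (Commute.refl _) ((Commute.one_left _).smul_left mu)
          rw [← Module.End.mul_apply, (hcomm.pow_left (b+1)).eq, Module.End.mul_apply, hw,
            map_zero]
        have := ih a (b + 1) (by omega) (A v) (σ.toLinearMap w) hAv hσw
        simpa using this
      have h2 : ((σ.toLinearMap - (lam * mu) • (1 : Module.End K L)) ^ (a + b)) ⁅v, B w⁆ = 0 := by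
        have hBw : (B ^ b) (B w) = 0 := by
          rw [← Module.End.mul_apply, ← pow_succ, hB]; exact hw
        have := ih (a + 1) b (by omega) v (B w) hv hBw
        simpa using this
      rw [h1, h2, smul_zero, add_zero]

/-- The key linear-algebraic fact in Proposition 3.1: if `σ` is a Lie algebra
endomorphism of `L`, `v` is a generalized eigenvector of `σ` for `λ` of order `m`
and `w` is a generalized eigenvector for `μ` of order `n`, then `⁅v, w⁆` is a
generalized eigenvector for `λμ` of order at most `m + n - 1`. -/
theorem stmt_5 {K : Type*} [Field K] {L : Type*} [LieRing L] [LieAlgebra K L]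
    (σ : L →ₗ⁅K⁆ L) (lam mu : K) (v w : L) (m n : ℕ) (hm : 0 < m) (hn : 0 < n)
    (hv : ((σ.toLinearMap - lam • (1 : Module.End K L)) ^ m) v = 0)
    (hw : ((σ.toLinearMap - mu • (1 : Module.End K L)) ^ n) w = 0) :
    ((σ.toLinearMap - (lam * mu) • (1 : Module.End K L)) ^ (m + n - 1)) ⁅v, w⁆ = 0 :=
  aux_key σ lam mu (m + n) m n le_rfl v w hv hw
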